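/- Let k be an algebraically closed field of characteristic 2. Every simple Lie algebra L over k of dimension 3 admits a basis {e, h, f} with ⁅h,e⁆ = e, ⁅h,f⁆ = f and ⁅e,f⁆ = h; consequently any two 3-dimensional simple Lie algebras over k are isomorphic. -/

import Mathlib

/-! Auxiliary lemmas for the classification of 3-dimensional simple Lie algebras in
characteristic two. -/

theorem lie_comm_char2 (k : Type*) {L : Type*} [Field k] [CharP k 2] [LieRing L]
    [LieAlgebra k L] (x y : L) : ⁅x, y⁆ = ⁅y, x⁆ := by
  have : -⁅y,x⁆ = (-1 : k) • ⁅y,x⁆ := by rw [neg_smul, one_smul]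
  rw [← lie_skew, this, show (-1 : k) = 1 by rw [CharTwo.neg_eq], one_smul]

/-- A non-nilpotent endomorphism of a nontrivial f.d. space over an algebraically closed
field has a nonzero eigenvalue. -/
theorem exists_ne_zero_eigenvalue (k V : Type*) [Field k] [IsAlgClosed k] [AddCommGroup V]
    [Module k V] [FiniteDimensional k V] (f : Module.End k V) (hf : ¬ IsNilpotent f) :
    ∃ μ : k, μ ≠ 0 ∧ f.HasEigenvalue μ := by
  by_contra hc
  push_neg at hc
  apply hf
  have hm : (minpoly k f).Monic := minpoly.monic (LinearMap.isIntegral f)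
  have hsp : (minpoly k f).Splits := IsAlgClosed.splits _
  have hroots : (minpoly k f).roots = Multiset.replicate (Multiset.card (minpoly k f).roots) 0 := by
    rw [Multiset.eq_replicate]
    refine ⟨rfl, fun a ha => ?_⟩
    by_contra h0
    exact hc a h0 (Module.End.hasEigenvalue_of_isRoot (Polynomial.isRoot_of_mem_roots ha))
  have hP : minpoly k f = Polynomial.X ^ Multiset.card (minpoly k f).roots := by
    conv_lhs => rw [hsp.eq_prod_roots_of_monic hm, hroots]
    simp [Multiset.map_replicate]
  refine ⟨Multiset.card (minpoly k f).roots, ?_⟩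
  have h0 := minpoly.aeval k f
  rw [hP] at h0
  simpa using h0

section aux
variable {k L : Type*} [Field k] [LieRing L] [LieAlgebra k L]

/-- If the span of two elements is a proper nonzero Lie ideal, we contradict simplicity. -/
theorem not_simple_aux [LieAlgebra.IsSimple k L] (v1 v2 v3 x y z : L)
    (hsp : ∀ m : L, ∃ α β γ : k, m = α • v1 + β • v2 + γ • v3)
    (h1x : ⁅v1, x⁆ ∈ Submodule.span k {x, y}) (h2x : ⁅v2, x⁆ ∈ Submodule.span k {x, y})
    (h3x : ⁅v3, x⁆ ∈ Submodule.span k {x, y})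
    (h1y : ⁅v1, y⁆ ∈ Submodule.span k {x, y}) (h2y : ⁅v2, y⁆ ∈ Submodule.span k {x, y})
    (h3y : ⁅v3, y⁆ ∈ Submodule.span k {x, y})
    (hx0 : x ≠ 0) (hz : z ∉ Submodule.span k {x, y}) : False := by
  set S : Submodule k L := Submodule.span k {x, y} with hS
  have hgen : ∀ m ∈ S, ⁅v1, m⁆ ∈ S ∧ ⁅v2, m⁆ ∈ S ∧ ⁅v3, m⁆ ∈ S := by
    intro m hm
    induction hm using Submodule.span_induction with
    | mem m hm =>
      rcases hm with rfl | hm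
      · exact ⟨h1x, h2x, h3x⟩
      · rw [Set.mem_singleton_iff] at hm; subst hm; exact ⟨h1y, h2y, h3y⟩
    | zero => simp
    | add m n _ _ hm hn =>
      refine ⟨?_, ?_, ?_⟩ <;> rw [lie_add] <;>
        [exact S.add_mem hm.1 hn.1; exact S.add_mem hm.2.1 hn.2.1; exact S.add_mem hm.2.2 hn.2.2]
    | smul c m _ hm => exact ⟨by rw [lie_smul]; exact S.smul_mem c hm.1,
        by rw [lie_smul]; exact S.smul_mem c hm.2.1, by rw [lie_smul]; exact S.smul_mem c hm.2.2⟩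
  have hlie : ∀ (u : L) {m : L}, m ∈ S → ⁅u, m⁆ ∈ S := by
    intro u m hm
    obtain ⟨α, β, γ, rfl⟩ := hsp u
    obtain ⟨h1, h2, h3⟩ := hgen m hm
    simp only [add_lie, smul_lie]
    exact S.add_mem (S.add_mem (S.smul_mem _ h1) (S.smul_mem _ h2)) (S.smul_mem _ h3)
  let I : LieIdeal k L := { S with lie_mem := fun {u m} hm => hlie u hm }
  have hmem : ∀ m : L, m ∈ I ↔ m ∈ S := fun m => Iff.rfl
  rcases LieAlgebra.IsSimple.eq_bot_or_eq_top I with hb | ht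
  · have : x ∈ I := (hmem x).mpr (Submodule.subset_span (Set.mem_insert x {y}))
    rw [hb, LieSubmodule.mem_bot] at this
    exact hx0 this
  · have : z ∈ I := by rw [ht]; exact LieSubmodule.mem_top z
    exact hz ((hmem z).mp this)

/-- Three elements with the `sl₂`-like char 2 relations and linear independence give the
desired basis. -/
theorem basis_of_triple (hL : Module.finrank k L = 3) (E H F : L)
    (hind : ∀ α β γ : k, α • E + β • H + γ • F = 0 → α = 0 ∧ β = 0 ∧ γ = 0)
    (r1 : ⁅H, E⁆ = E) (r2 : ⁅H, F⁆ = F) (r3 : ⁅E, F⁆ = H) :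
    ∃ B : Module.Basis (Fin 3) k L, ⁅B 1, B 0⁆ = B 0 ∧ ⁅B 1, B 2⁆ = B 2 ∧ ⁅B 0, B 2⁆ = B 1 := by
  haveI : FiniteDimensional k L := Module.finite_of_finrank_eq_succ hL
  have hli : LinearIndependent k ![E, H, F] := by
    rw [Fintype.linearIndependent_iff]
    intro g hg
    rw [Fin.sum_univ_three] at hg
    simp only [Matrix.cons_val_zero, Matrix.cons_val_one, Matrix.head_cons,
      Matrix.cons_val_two, Matrix.tail_cons] at hg
    obtain ⟨h0, h1, h2⟩ := hind _ _ _ hg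
    intro i; fin_cases i <;> assumption
  let B := basisOfLinearIndependentOfCardEqFinrank hli (by simpa using hL.symm)
  have hB : ⇑B = ![E, H, F] := coe_basisOfLinearIndependentOfCardEqFinrank hli _
  refine ⟨B, ?_, ?_, ?_⟩ <;> rw [hB] <;> simp only [Matrix.cons_val_zero, Matrix.cons_val_one,
    Matrix.head_cons, Matrix.cons_val_two, Matrix.tail_cons] <;> assumption

end aux

section equiv
variable {k L L' : Type*} [Field k] [CharP k 2] [LieRing L] [LieAlgebra k L]
  [LieRing L'] [LieAlgebra k L']

attribute [local instance] LieRing.ofAssociativeRing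

/-- Two Lie algebras with bases satisfying the same structure constants are isomorphic. -/
theorem equiv_of_bases (B : Module.Basis (Fin 3) k L) (B' : Module.Basis (Fin 3) k L')
    (r1 : ⁅B 1, B 0⁆ = B 0) (r2 : ⁅B 1, B 2⁆ = B 2) (r3 : ⁅B 0, B 2⁆ = B 1)
    (r1' : ⁅B' 1, B' 0⁆ = B' 0) (r2' : ⁅B' 1, B' 2⁆ = B' 2) (r3' : ⁅B' 0, B' 2⁆ = B' 1) :
    Nonempty (L ≃ₗ⁅k⁆ L') := by
  let f : L ≃ₗ[k] L' := B.equiv B' (Equiv.refl _)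
  have hf : ∀ i, f (B i) = B' i := fun i => B.equiv_apply i B' (Equiv.refl _)
  have hbr : ∀ i j, f ⁅B i, B j⁆ = ⁅f (B i), f (B j)⁆ := by
    have q1 : ⁅B 0, B 1⁆ = B 0 := by rw [lie_comm_char2 k, r1]
    have q2 : ⁅B 2, B 1⁆ = B 2 := by rw [lie_comm_char2 k, r2]
    have q3 : ⁅B 2, B 0⁆ = B 1 := by rw [lie_comm_char2 k, r3]
    have q1' : ⁅B' 0, B' 1⁆ = B' 0 := by rw [lie_comm_char2 k, r1']
    have q2' : ⁅B' 2, B' 1⁆ = B' 2 := by rw [lie_comm_char2 k, r2']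
    have q3' : ⁅B' 2, B' 0⁆ = B' 1 := by rw [lie_comm_char2 k, r3']
    intro i j
    simp only [hf]
    fin_cases i <;> fin_cases j <;>
      simp only [Fin.zero_eta, Fin.mk_one, Fin.reduceFinMk, lie_self, map_zero,
        r1, r2, r3, r1', r2', r3', q1, q2, q3, q1', q2', q3', hf]
  have key : ∀ x y : L, f ⁅x, y⁆ = ⁅f x, f y⁆ := by
    have hm : ((LieAlgebra.ad k L : L →ₗ⁅k⁆ Module.End k L) :
          L →ₗ[k] Module.End k L).compr₂ (f : L →ₗ[k] L')
        = (((LieAlgebra.ad k L' : L' →ₗ⁅k⁆ Module.End k L') :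
            L' →ₗ[k] Module.End k L').comp (f : L →ₗ[k] L')).compl₂ (f : L →ₗ[k] L') := by
      apply B.ext; intro i
      apply B.ext; intro j
      simp only [LinearMap.compr₂_apply, LinearMap.compl₂_apply, LinearMap.comp_apply,
        LieHom.coe_toLinearMap, LieAlgebra.ad_apply, LinearEquiv.coe_coe]
      exact hbr i j
    intro x y
    have := LinearMap.congr_fun (LinearMap.congr_fun hm x) y
    simpa only [LinearMap.compr₂_apply, LinearMap.compl₂_apply, LinearMap.comp_apply,
      LieHom.coe_toLinearMap, LieAlgebra.ad_apply, LinearEquiv.coe_coe] using this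
  exact ⟨{ f with map_lie' := fun {x y} => key x y }⟩

end equiv

section main
variable (k : Type*) [Field k] [IsAlgClosed k] [CharP k 2]
variable (L : Type*) [LieRing L] [LieAlgebra k L] [LieAlgebra.IsSimple k L]

/-- Any 3-dimensional simple Lie algebra over an algebraically closed field of
characteristic 2 has a basis with the standard relations. -/
theorem exists_nice_basis (hL : Module.finrank k L = 3) :
    ∃ B : Module.Basis (Fin 3) k L, ⁅B 1, B 0⁆ = B 0 ∧ ⁅B 1, B 2⁆ = B 2 ∧ ⁅B 0, B 2⁆ = B 1 := by
  haveI : FiniteDimensional k L := Module.finite_of_finrank_eq_succ hL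
  haveI : Nontrivial L := Module.nontrivial_of_finrank_pos (R := k) (by rw [hL]; norm_num)
  have hadd : ∀ x : k, x + x = 0 := fun x => by
    rw [← two_mul, show (2:k) = 0 from CharTwo.two_eq_zero, zero_mul]
  -- L is not nilpotent, since it is simple
  have hnn : ¬ LieRing.IsNilpotent L := by
    intro hnil
    have h1 := LieAlgebra.non_trivial_center_of_isNilpotent (R := k) (L := L)
    have h2 : LieAlgebra.center k L = ⊥ := LieAlgebra.center_eq_bot k L
    obtain ⟨x, y, hxy⟩ := h1
    apply hxy
    have hx : (x : L) = 0 := (LieSubmodule.mem_bot (R := k) (L := L) _).mp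
      ((SetLike.ext_iff.mp h2 (x : L)).mp x.2)
    have hy : (y : L) = 0 := (LieSubmodule.mem_bot (R := k) (L := L) _).mp
      ((SetLike.ext_iff.mp h2 (y : L)).mp y.2)
    exact Subtype.ext (hx.trans hy.symm)
  -- Engel's theorem: some `ad` is not nilpotent
  rw [LieAlgebra.isNilpotent_iff_forall (R := k)] at hnn
  push_neg at hnn
  obtain ⟨h₀, hh₀⟩ := hnn
  -- a nonzero eigenvalue, rescaled to 1
  obtain ⟨μ, hμ0, hμ⟩ := exists_ne_zero_eigenvalue k L (LieAlgebra.ad k L h₀) hh₀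
  obtain ⟨e, he⟩ := hμ.exists_hasEigenvector
  have he0 : e ≠ 0 := he.right
  have heq : ⁅h₀, e⁆ = μ • e := by
    have := he.apply_eq_smul; rwa [LieAlgebra.ad_apply] at this
  obtain ⟨h, hhdef⟩ : ∃ h : L, h = μ⁻¹ • h₀ := ⟨_, rfl⟩
  have hhe : ⁅h, e⁆ = e := by
    rw [hhdef, smul_lie, heq, smul_smul, inv_mul_cancel₀ hμ0, one_smul]
  have hh0 : h ≠ 0 := fun hz => he0 (by rw [← hhe, hz, zero_lie])
  have heh : ⁅e, h⁆ = e := by rw [lie_comm_char2 k, hhe]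
  -- complete to a "basis" h, e, w
  have hpair : LinearIndependent k ![h, e] := by
    rw [LinearIndependent.pair_iff' hh0]
    intro a hae
    apply he0
    calc e = ⁅h, e⁆ := hhe.symm
      _ = ⁅h, a • h⁆ := by rw [hae]
      _ = 0 := by rw [lie_smul, lie_self, smul_zero]
  obtain ⟨w, hw3'⟩ := exists_linearIndependent_snoc_of_lt_finrank hpair (by rw [hL]; norm_num)
  have hw3 : LinearIndependent k ![h, e, w] := by
    have hfun : ![h, e, w] = Fin.snoc ![h, e] w := by
      funext i; fin_cases i <;> rfl
    rw [hfun]; exact hw3'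
  have lin3 : ∀ α β γ : k, α • h + β • e + γ • w = 0 → α = 0 ∧ β = 0 ∧ γ = 0 := by
    intro α β γ hcomb
    have hz := Fintype.linearIndependent_iff.mp hw3 ![α, β, γ] ?_
    · exact ⟨hz 0, hz 1, hz 2⟩
    · rw [Fin.sum_univ_three]; simpa using hcomb
  have card3 : Fintype.card (Fin 3) = Module.finrank k L := by simpa using hL.symm
  let B0 := basisOfLinearIndependentOfCardEqFinrank hw3 card3
  have hB0 : ⇑B0 = ![h, e, w] := coe_basisOfLinearIndependentOfCardEqFinrank _ _
  have span3 : ∀ x : L, ∃ α β γ : k, x = α • h + β • e + γ • w := by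
    intro x
    refine ⟨B0.repr x 0, B0.repr x 1, B0.repr x 2, ?_⟩
    have hsr := B0.sum_repr x
    rw [Fin.sum_univ_three] at hsr
    simp only [hB0, Matrix.cons_val_zero, Matrix.cons_val_one, Matrix.head_cons,
      Matrix.cons_val_two, Matrix.tail_cons] at hsr
    exact hsr.symm
  -- structure constants
  obtain ⟨a, b, c, hhw⟩ := span3 ⁅h, w⁆
  obtain ⟨p, q, r, hew⟩ := span3 ⁅e, w⁆
  -- Jacobi identity constraints
  have J := leibniz_lie h e w
  rw [hew, hhw, hhe] at J
  simp only [lie_add, lie_smul, lie_self, smul_zero, zero_add, add_zero, hhe, heh, hhw, hew] at J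
  have Jc : (r*a - (p + c*p)) • h + ((r*b) - (a + c*q)) • e + ((r*c) - (r + c*r)) • w = 0 := by
    linear_combination (norm := module) J
  obtain ⟨E1, E2, E3⟩ := lin3 _ _ _ Jc
  have hr : r = 0 := by linear_combination -E3
  have hpc : p * (1 + c) = 0 := by linear_combination -E1 + a * hr
  have hacq : a + c * q = 0 := by linear_combination -E2 + b * hr
  -- simplicity forces p ≠ 0
  have hp : p ≠ 0 := by
    intro hp0
    have hewq : ⁅e, w⁆ = q • e := by
      rw [hew, hp0, hr, zero_smul, zero_smul, zero_add, add_zero]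
    have hwe : ⁅w, e⁆ = q • e := by rw [lie_comm_char2 k, hewq]
    by_cases hc : c = 0
    · -- span {e, w} would be an ideal
      have ha : a = 0 := by linear_combination hacq - q * hc
      have hhwb : ⁅h, w⁆ = b • e := by
        rw [hhw, ha, hc, zero_smul, zero_smul, zero_add, add_zero]
      have hegen : e ∈ Submodule.span k {e, w} :=
        Submodule.subset_span (Set.mem_insert _ _)
      refine not_simple_aux h e w e w h span3
        (by rw [hhe]; exact hegen)
        (by rw [lie_self]; exact Submodule.zero_mem _)
        (by rw [hwe]; exact Submodule.smul_mem _ _ hegen)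
        (by rw [hhwb]; exact Submodule.smul_mem _ _ hegen)
        (by rw [hewq]; exact Submodule.smul_mem _ _ hegen)
        (by rw [lie_self]; exact Submodule.zero_mem _)
        he0 ?_
      intro hmem
      rw [Submodule.mem_span_pair] at hmem
      obtain ⟨α, β, hαβ⟩ := hmem
      obtain ⟨A1, A2, A3⟩ := lin3 (-1) α β (by linear_combination (norm := module) hαβ)
      norm_num at A1
    · -- span {e, w + (a/c) • h} would be an ideal
      have hca : c * (a/c) = a := by field_simp
      have hhw' : ⁅h, w⁆ = c • (w + (a/c) • h) + b • e := by
        rw [hhw]; linear_combination (norm := module) hca.symm • h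
      have hhu : ⁅h, w + (a/c) • h⁆ = c • (w + (a/c) • h) + b • e := by
        rw [lie_add, lie_smul, lie_self, smul_zero, add_zero, hhw']
      have heu : ⁅e, w + (a/c) • h⁆ = (q + a/c) • e := by
        rw [lie_add, lie_smul, heh, hewq]; module
      have hwu : ⁅w, w + (a/c) • h⁆ = (a/c) • (c • (w + (a/c) • h) + b • e) := by
        rw [lie_add, lie_self, zero_add, lie_smul, lie_comm_char2 k w h, hhw']
      have hegen : e ∈ Submodule.span k {e, w + (a/c) • h} :=
        Submodule.subset_span (Set.mem_insert _ _)
      have hugen : w + (a/c) • h ∈ Submodule.span k {e, w + (a/c) • h} :=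
        Submodule.subset_span (Set.mem_insert_of_mem _ rfl)
      have m1 : ⁅h, w + (a/c) • h⁆ ∈ Submodule.span k {e, w + (a/c) • h} := by
        rw [hhu]
        exact Submodule.add_mem _ (Submodule.smul_mem _ _ hugen) (Submodule.smul_mem _ _ hegen)
      have m2 : ⁅w, w + (a/c) • h⁆ ∈ Submodule.span k {e, w + (a/c) • h} := by
        rw [hwu]
        refine Submodule.smul_mem _ _ ?_
        exact Submodule.add_mem _ (Submodule.smul_mem _ _ hugen) (Submodule.smul_mem _ _ hegen)
      refine not_simple_aux h e w e (w + (a/c) • h) h span3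
        (by rw [hhe]; exact hegen)
        (by rw [lie_self]; exact Submodule.zero_mem _)
        (by rw [hwe]; exact Submodule.smul_mem _ _ hegen)
        m1
        (by rw [heu]; exact Submodule.smul_mem _ _ hegen)
        m2
        he0 ?_
      intro hmem
      rw [Submodule.mem_span_pair] at hmem
      obtain ⟨α, β, hαβ⟩ := hmem
      obtain ⟨A1, A2, A3⟩ := lin3 (β * (a/c) - 1) α β (by linear_combination (norm := module) hαβ)
      have : (-1 : k) = 0 := by linear_combination A1 - (a/c) * A3
      norm_num at this
  -- hence c = 1 and q = a
  have hc1 : c = 1 := by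
    have h1c : 1 + c = 0 := by
      rcases mul_eq_zero.mp hpc with hh | hh
      · exact absurd hh hp
      · exact hh
    have : c = -1 := by linear_combination h1c
    rw [this, CharTwo.neg_eq]
  rw [hc1, one_mul] at hacq
  have hq : q = a := by
    have : q = -a := by linear_combination hacq
    rw [this, CharTwo.neg_eq]
  rw [hc1, one_smul] at hhw
  rw [hr, zero_smul, add_zero, hq] at hew
  -- normalize the third basis vector
  have hw₁h : ⁅h, w + a • h⁆ = (w + a • h) + b • e := by
    rw [lie_add, lie_smul, lie_self, smul_zero, add_zero, hhw]; module
  have hw₁e : ⁅e, w + a • h⁆ = p • h := by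
    rw [lie_add, lie_smul, heh, hew]
    calc p • h + a • e + a • e = p • h + (a + a) • e := by module
      _ = p • h := by rw [hadd, zero_smul, add_zero]
  obtain ⟨w₂, hw₂def⟩ : ∃ w₂ : L, w₂ = p⁻¹ • (w + a • h) := ⟨_, rfl⟩
  have hew₂ : ⁅e, w₂⁆ = h := by
    rw [hw₂def, lie_smul, hw₁e, smul_smul, inv_mul_cancel₀ hp, one_smul]
  have hhw₂ : ⁅h, w₂⁆ = w₂ + (p⁻¹ * b) • e := by
    rw [hw₂def, lie_smul, hw₁h, smul_add, smul_smul]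
  obtain ⟨γ, hγdef⟩ : ∃ γ : k, γ = p⁻¹ * b := ⟨_, rfl⟩
  rw [← hγdef] at hhw₂
  by_cases hγ : γ = 0
  · -- already diagonal: basis (e, h, w₂)
    refine basis_of_triple hL e h w₂ ?_ hhe (by rw [hhw₂, hγ, zero_smul, add_zero]) hew₂
    intro α β δ hcomb
    rw [hw₂def] at hcomb
    obtain ⟨C1, C2, C3⟩ := lin3 (β + δ * (p⁻¹ * a)) α (δ * p⁻¹)
      (by linear_combination (norm := module) hcomb)
    have hδ : δ = 0 := by
      rcases mul_eq_zero.mp C3 with hh | hh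
      · exact hh
      · exact absurd hh (inv_ne_zero hp)
    exact ⟨C2, by linear_combination C1 - (p⁻¹ * a) * hδ, hδ⟩
  · -- Jordan block case: change basis
    obtain ⟨s, hs2⟩ := IsAlgClosed.exists_pow_nat_eq γ (n := 2) (by norm_num)
    have hs0 : s ≠ 0 := fun h0 => hγ (by rw [← hs2, h0]; ring)
    have hsc : s⁻¹ * γ = s := by rw [← hs2, sq, ← mul_assoc, inv_mul_cancel₀ hs0, one_mul]
    refine basis_of_triple hL (s • e) (h + s • e) (s⁻¹ • w₂ + h) ?_ ?_ ?_ ?_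
    · intro α β δ hcomb
      rw [hw₂def] at hcomb
      obtain ⟨C1, C2, C3⟩ := lin3 (β + δ * (s⁻¹ * (p⁻¹ * a)) + δ) (α * s + β * s)
        (δ * (s⁻¹ * p⁻¹)) (by linear_combination (norm := module) hcomb)
      have hδ : δ = 0 := by
        rcases mul_eq_zero.mp C3 with hh | hh
        · exact hh
        · exact absurd hh (mul_ne_zero (inv_ne_zero hs0) (inv_ne_zero hp))
      have hβ : β = 0 := by linear_combination C1 - (s⁻¹ * (p⁻¹ * a) + 1) * hδ
      have hα : α = 0 := by
        have : α * s = 0 := by linear_combination C2 - s * hβ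
        rcases mul_eq_zero.mp this with hh | hh
        · exact hh
        · exact absurd hh hs0
      exact ⟨hα, hβ, hδ⟩
    · rw [add_lie, lie_smul, hhe, smul_lie, lie_smul, lie_self, smul_zero, smul_zero, add_zero]
    · simp only [add_lie, lie_add, lie_smul, smul_lie, lie_self, hhw₂, heh, hew₂,
        smul_zero, add_zero, zero_add, smul_add, smul_smul]
      linear_combination (norm := module) hsc • e + (hadd s) • e + (mul_inv_cancel₀ hs0) • h
    · rw [smul_lie, lie_add, lie_smul, hew₂, heh, smul_add, smul_smul,
        mul_inv_cancel₀ hs0, one_smul]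

end main

/-- Over an algebraically closed field of characteristic 2, every
3-dimensional simple Lie algebra admits a basis `{e, h, f}` (here `e = B 0`, `h = B 1`,
`f = B 2`) with `⁅h,e⁆ = e`, `⁅h,f⁆ = f`, `⁅e,f⁆ = h`; consequently any two 3-dimensional
simple Lie algebras over `k` are isomorphic. -/
theorem stmt_5 (k : Type*) [Field k] [IsAlgClosed k] [CharP k 2]
    (L L' : Type*) [LieRing L] [LieAlgebra k L] [LieRing L'] [LieAlgebra k L']
    [LieAlgebra.IsSimple k L] [LieAlgebra.IsSimple k L']
    (hL : Module.finrank k L = 3) (hL' : Module.finrank k L' = 3) :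
    (∃ B : Module.Basis (Fin 3) k L,
      ⁅B 1, B 0⁆ = B 0 ∧ ⁅B 1, B 2⁆ = B 2 ∧ ⁅B 0, B 2⁆ = B 1) ∧
    Nonempty (L ≃ₗ⁅k⁆ L') := by
  obtain ⟨B, r1, r2, r3⟩ := exists_nice_basis k L hL
  obtain ⟨B', r1', r2', r3'⟩ := exists_nice_basis k L' hL'
  exact ⟨⟨B, r1, r2, r3⟩, equiv_of_bases B B' r1 r2 r3 r1' r2' r3'⟩
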